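/- For m = n = 3, the area of the loop x̄(α) = a cos³α + b_x sin³α + tanθ(b_x tanκ + b_y)(sin α − sin³α), ȳ(α) = b_y sin α + b_x tanκ (sin α − sin³α) equals S = (3π a/8)(b_x tan κ + 2 b_y); in particular S is independent of θ. -/

import Mathlib

open Real intervalIntegral

theorem stmt_12 (a bx by' θ κ : ℝ)
    (hθ : θ ∈ Set.Ioo (-(π / 2)) (π / 2)) (hκ : κ ∈ Set.Ioo (-(π / 2)) (π / 2))
    (x y : ℝ → ℝ)
    (hx : x = fun α => a * Real.cos α ^ 3 + bx * Real.sin α ^ 3 +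
        Real.tan θ * (bx * Real.tan κ + by') * (Real.sin α - Real.sin α ^ 3))
    (hy : y = fun α => by' * Real.sin α + bx * Real.tan κ * (Real.sin α - Real.sin α ^ 3)) :
    (1 / 2) * ∫ α in (0:ℝ)..(2 * π), (x α * deriv y α - y α * deriv x α) =
      3 * π * a / 8 * (bx * Real.tan κ + 2 * by') := by
  subst hx hy
  set t := Real.tan θ with ht
  set k := Real.tan κ with hk
  have hY : ∀ α : ℝ, HasDerivAt (fun α => by' * Real.sin α + bx * k * (Real.sin α - Real.sin α ^ 3))
      (by' * Real.cos α + bx * k * (Real.cos α - 3 * Real.sin α ^ 2 * Real.cos α)) α := by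
    intro α
    have hs := Real.hasDerivAt_sin α
    have := (hs.const_mul by').add ((hs.sub (hs.pow 3)).const_mul (bx * k))
    refine HasDerivAt.congr_deriv this (Eq.symm ?_)
    try ring
  have hX : ∀ α : ℝ, HasDerivAt (fun α => a * Real.cos α ^ 3 + bx * Real.sin α ^ 3 +
        t * (bx * k + by') * (Real.sin α - Real.sin α ^ 3))
      (a * (3 * Real.cos α ^ 2 * (-Real.sin α)) + bx * (3 * Real.sin α ^ 2 * Real.cos α) +
        t * (bx * k + by') * (Real.cos α - 3 * Real.sin α ^ 2 * Real.cos α)) α := by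
    intro α
    have hs := Real.hasDerivAt_sin α
    have hc := Real.hasDerivAt_cos α
    have := (((hc.pow 3).const_mul a).add ((hs.pow 3).const_mul bx)).add
      ((hs.sub (hs.pow 3)).const_mul (t * (bx * k + by')))
    refine HasDerivAt.congr_deriv this (Eq.symm ?_)
    try ring
  have hdy : deriv (fun α => by' * Real.sin α + bx * k * (Real.sin α - Real.sin α ^ 3)) =
      fun α => by' * Real.cos α + bx * k * (Real.cos α - 3 * Real.sin α ^ 2 * Real.cos α) :=
    funext fun α => (hY α).deriv
  have hdx : deriv (fun α => a * Real.cos α ^ 3 + bx * Real.sin α ^ 3 +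
        t * (bx * k + by') * (Real.sin α - Real.sin α ^ 3)) =
      fun α => a * (3 * Real.cos α ^ 2 * (-Real.sin α)) + bx * (3 * Real.sin α ^ 2 * Real.cos α) +
        t * (bx * k + by') * (Real.cos α - 3 * Real.sin α ^ 2 * Real.cos α) :=
    funext fun α => (hX α).deriv
  simp only [hdy, hdx]
  set F : ℝ → ℝ := fun α =>
    (3/4 * a * by' + 3/8 * a * bx * k) * α +
    (-(1/4) * by'^2 * t + 1/4 * bx * by' - 1/4 * bx * by' * t * k + 1/4 * bx^2 * k) * Real.cos α ^ 2 +
    (1/16 * by'^2 * t - 1/16 * bx * by' + 1/16 * bx * by' * t * k - 1/16 * bx^2 * k) * Real.cos α ^ 4 +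
    (1/2 * a * by' + 1/2 * a * bx * k) * (Real.sin α * Real.cos α) +
    (-(1/4) * a * by' + 1/8 * a * bx * k) * (Real.sin α * Real.cos α ^ 3) +
    (1/4 * by'^2 * t - 1/4 * bx * by' + 1/4 * bx * by' * t * k - 1/4 * bx^2 * k) * Real.sin α ^ 2 +
    (-(3/8) * by'^2 * t + 3/8 * bx * by' - 3/8 * bx * by' * t * k + 3/8 * bx^2 * k) *
      (Real.sin α ^ 2 * Real.cos α ^ 2) +
    (1/4 * a * by' - 1/8 * a * bx * k) * (Real.sin α ^ 3 * Real.cos α) +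
    (1/16 * by'^2 * t - 1/16 * bx * by' + 1/16 * bx * by' * t * k - 1/16 * bx^2 * k) * Real.sin α ^ 4
    with hF
  have hFd : ∀ α : ℝ, HasDerivAt F
      ((a * Real.cos α ^ 3 + bx * Real.sin α ^ 3 +
          t * (bx * k + by') * (Real.sin α - Real.sin α ^ 3)) *
        (by' * Real.cos α + bx * k * (Real.cos α - 3 * Real.sin α ^ 2 * Real.cos α)) -
       (by' * Real.sin α + bx * k * (Real.sin α - Real.sin α ^ 3)) *
        (a * (3 * Real.cos α ^ 2 * (-Real.sin α)) + bx * (3 * Real.sin α ^ 2 * Real.cos α) +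
          t * (bx * k + by') * (Real.cos α - 3 * Real.sin α ^ 2 * Real.cos α))) α := by
    intro α
    have hs := Real.hasDerivAt_sin α
    have hc := Real.hasDerivAt_cos α
    have hu := (((((((((hasDerivAt_id α).const_mul (3/4 * a * by' + 3/8 * a * bx * k)).add
      ((hc.pow 2).const_mul
        (-(1/4) * by'^2 * t + 1/4 * bx * by' - 1/4 * bx * by' * t * k + 1/4 * bx^2 * k))).add
      ((hc.pow 4).const_mul
        (1/16 * by'^2 * t - 1/16 * bx * by' + 1/16 * bx * by' * t * k - 1/16 * bx^2 * k))).add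
      ((hs.mul hc).const_mul (1/2 * a * by' + 1/2 * a * bx * k))).add
      ((hs.mul (hc.pow 3)).const_mul (-(1/4) * a * by' + 1/8 * a * bx * k))).add
      ((hs.pow 2).const_mul
        (1/4 * by'^2 * t - 1/4 * bx * by' + 1/4 * bx * by' * t * k - 1/4 * bx^2 * k))).add
      (((hs.pow 2).mul (hc.pow 2)).const_mul
        (-(3/8) * by'^2 * t + 3/8 * bx * by' - 3/8 * bx * by' * t * k + 3/8 * bx^2 * k))).add
      (((hs.pow 3).mul hc).const_mul (1/4 * a * by' - 1/8 * a * bx * k))).add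
      ((hs.pow 4).const_mul
        (1/16 * by'^2 * t - 1/16 * bx * by' + 1/16 * bx * by' * t * k - 1/16 * bx^2 * k))
    simp only [Pi.pow_apply] at hu
    refine HasDerivAt.congr_deriv hu (Eq.symm ?_)
    have h1 := Real.sin_sq_add_cos_sq α
    linear_combination ((3/4 * a * by' + 3/8 * a * bx * k) +
      (5/4 * a * by' + 7/8 * a * bx * k) * Real.cos α ^ 2 +
      (by'^2 * t - bx * by' + bx * by' * t * k - bx^2 * k) * (Real.sin α * Real.cos α) +
      (1/4 * a * by' - 1/8 * a * bx * k) * Real.sin α ^ 2 -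
      3 * a * bx * k * (Real.sin α ^ 2 * Real.cos α ^ 2)) * h1
  have hint : IntervalIntegrable (fun α =>
      (a * Real.cos α ^ 3 + bx * Real.sin α ^ 3 +
          t * (bx * k + by') * (Real.sin α - Real.sin α ^ 3)) *
        (by' * Real.cos α + bx * k * (Real.cos α - 3 * Real.sin α ^ 2 * Real.cos α)) -
       (by' * Real.sin α + bx * k * (Real.sin α - Real.sin α ^ 3)) *
        (a * (3 * Real.cos α ^ 2 * (-Real.sin α)) + bx * (3 * Real.sin α ^ 2 * Real.cos α) +
          t * (bx * k + by') * (Real.cos α - 3 * Real.sin α ^ 2 * Real.cos α)))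
      MeasureTheory.volume 0 (2 * π) := by
    apply Continuous.intervalIntegrable
    fun_prop
  have key := intervalIntegral.integral_eq_sub_of_hasDerivAt (fun α _ => hFd α) hint
  rw [key, hF]
  simp only [Real.sin_two_pi, Real.cos_two_pi, Real.sin_zero, Real.cos_zero]
  ring
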